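/- Positive time flow of non-commutative Laurent bi-orthogonal polynomials (Proposition 4.10): let D : R → R satisfy D(a + b) = D(a) + D(b) and D(a·b) = D(a)·b + a·D(b) for all a, b ∈ R, and suppose D(m(j)) = m(j+1) for every j ∈ ℤ. Then for every n ≥ 1, assuming all Toeplitz matrices T and all quasi-determinants H, G occurring below are invertible (resp. nonzero), applying D to each coefficient of the Laurent polynomial (Q_n^{(0)})* yields the Laurent polynomial (Q_{n−1}^{(0)})*·η_n, where η_n := −ξ_{n−1}·(ψ_n^{(0)})⁻¹ and ξ_{n−1} := ψ_{n−1}^{(0)} − φ_{n−1}^{(−1)}; i.e. for every r, D of the coefficient of z^{−r} in (Q_n^{(0)})* equals the coefficient of z^{−r} in (Q_{n−1}^{(0)})*·η_n. -/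

import Mathlib

/-- The `n × n` shifted Toeplitz matrix `T_n^{(k)} = (m(k + i − j))_{i,j=0}^{n−1}`. -/
noncomputable def Tmat {R : Type*} [DivisionRing R] (m : ℤ → R) (k : ℤ) (n : ℕ) :
    Matrix (Fin n) (Fin n) R :=
  Matrix.of fun i j => m (k + (i.val : ℤ) - (j.val : ℤ))

/-- The Laurent polynomial `(Q_n^{(k)})*(z) = z^{−n} − Σ_{i=0}^{n−1} c_i z^{−i}`, where
`(c_0, …, c_{n−1})ᵀ = (T_n^{(k)})⁻¹·(m(k−n), …, m(k−1))ᵀ`, given as the coefficient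
function `ℤ → R` (the value at `e` is the coefficient of `z^e`). -/
noncomputable def Qs {R : Type*} [DivisionRing R] (m : ℤ → R) (k : ℤ) (n : ℕ) :
    ℤ → R := fun e =>
  if e = -(n : ℤ) then 1
  else if he : -(n : ℤ) < e ∧ e ≤ 0 then
    -(∑ j : Fin n, Ring.inverse (Tmat m k n) ⟨(-e).toNat, by omega⟩ j *
      m (k - (n : ℤ) + (j.val : ℤ)))
  else 0

/-- The quasi-determinant
`H_n^{(k)} = m(k) − (m(k+n), …, m(k+1))·(T_n^{(k)})⁻¹·(m(k−n), …, m(k−1))ᵀ`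
(with `H_0^{(k)} = m(k)`). -/
noncomputable def Hq {R : Type*} [DivisionRing R] (m : ℤ → R) (n : ℕ) (k : ℤ) : R :=
  m k - ∑ j : Fin n, ∑ l : Fin n,
    m (k + (n : ℤ) - (j.val : ℤ)) * Ring.inverse (Tmat m k n) j l *
      m (k - (n : ℤ) + (l.val : ℤ))

/-- The quasi-determinant
`G_n^{(k)} = m(k−n) − (m(k), …, m(k−n+1))·(T_n^{(k+1)})⁻¹·(m(k+1−n), …, m(k))ᵀ`
(with `G_0^{(k)} = m(k)`). -/
noncomputable def Gq {R : Type*} [DivisionRing R] (m : ℤ → R) (n : ℕ) (k : ℤ) : R :=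
  m (k - (n : ℤ)) - ∑ j : Fin n, ∑ l : Fin n,
    m (k - (j.val : ℤ)) * Ring.inverse (Tmat m (k + 1) n) j l *
      m (k + 1 - (n : ℤ) + (l.val : ℤ))

/-- `ψ_n^{(k)} = (H_n^{(k)})⁻¹·H_n^{(k−1)}`. -/
noncomputable def psi {R : Type*} [DivisionRing R] (m : ℤ → R) (n : ℕ) (k : ℤ) : R :=
  (Hq m n k)⁻¹ * Hq m n (k - 1)

/-- `φ_n^{(k)} = (G_n^{(k)})⁻¹·G_n^{(k−1)}`. -/
noncomputable def phi {R : Type*} [DivisionRing R] (m : ℤ → R) (n : ℕ) (k : ℤ) : R :=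
  (Gq m n k)⁻¹ * Gq m n (k - 1)

section Aux
variable {R : Type*} [DivisionRing R] (m : ℤ → R)

lemma Qs_lead (k : ℤ) (n : ℕ) : Qs m k n (-(n : ℤ)) = 1 := by
  simp [Qs]

lemma Qs_zero (k : ℤ) (n : ℕ) (e : ℤ) (he : e < -(n : ℤ) ∨ 0 < e) :
    Qs m k n e = 0 := by
  have h1 : e ≠ -(n:ℤ) := by omega
  have h2 : ¬(-(n : ℤ) < e ∧ e ≤ 0) := by omega
  simp [Qs, h1, h2]

lemma Qs_mid (k : ℤ) (n : ℕ) (j : ℕ) (hj : j < n) :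
    Qs m k n (-(j : ℤ)) =
      -(∑ l : Fin n, Ring.inverse (Tmat m k n) ⟨j, hj⟩ l * m (k - (n:ℤ) + (l.val : ℤ))) := by
  have h1 : -(j:ℤ) ≠ -(n:ℤ) := by omega
  have h2 : -(n:ℤ) < -(j:ℤ) ∧ -(j:ℤ) ≤ 0 := by
    constructor <;> omega
  simp only [Qs, h1, if_false, dif_pos h2]
  norm_num

end Aux

section Aux2
variable {R : Type*} [DivisionRing R] (m : ℤ → R)

lemma Qs_ortho (k : ℤ) (n : ℕ) (hT : IsUnit (Tmat m k n)) (i : ℕ) (hi : i ≤ n) :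
    ∑ j : Fin (n+1), m (k + (i:ℤ) - (j:ℤ)) * Qs m k n (-(j : ℤ)) =
      if i = n then Hq m n k else 0 := by
  have hmul : Tmat m k n * Ring.inverse (Tmat m k n) = 1 := Ring.mul_inverse_cancel _ hT
  rw [Fin.sum_univ_castSucc]
  simp only [Fin.coe_castSucc, Fin.val_last]
  have hQ : ∀ j : Fin n, Qs m k n (-(j:ℤ)) =
      -(∑ l : Fin n, Ring.inverse (Tmat m k n) j l * m (k - (n:ℤ) + (l:ℤ))) := by
    intro j
    rw [Qs_mid m k n j j.isLt]
  simp only [hQ, Qs_lead, mul_one, mul_neg, Finset.mul_sum, ← mul_assoc]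
  rw [Finset.sum_neg_distrib, Finset.sum_comm]
  rcases eq_or_lt_of_le hi with h | h
  · subst h
    rw [if_pos rfl, Hq]
    rw [show m (k + (i:ℤ) - (i:ℤ)) = m k by congr 1; ring]
    rw [add_comm, ← sub_eq_add_neg]
    congr 1
    rw [Finset.sum_comm]
  · rw [if_neg (by omega)]
    have key : ∀ l : Fin n, (∑ j : Fin n, m (k + (i:ℤ) - (j:ℤ)) * Ring.inverse (Tmat m k n) j l)
        = if (⟨i, h⟩ : Fin n) = l then 1 else 0 := by
      intro l
      have hrow : ∀ j : Fin n, m (k + (i:ℤ) - (j:ℤ)) = Tmat m k n ⟨i, h⟩ j := fun j => rfl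
      simp only [hrow, ← Matrix.mul_apply, hmul, Matrix.one_apply]
    simp_rw [← Finset.sum_mul, key]
    simp only [ite_mul, one_mul, zero_mul, Finset.sum_ite_eq, Finset.mem_univ, if_true]
    rw [show k - (n:ℤ) + ((⟨i, h⟩ : Fin n):ℤ) = k + (i:ℤ) - (n:ℤ) from by simp; ring, neg_add_cancel]

end Aux2
section Aux3
variable {R : Type*} [DivisionRing R] (m : ℤ → R)

noncomputable def Wvec (k : ℤ) (n : ℕ) : Fin (n+1) → R := fun i =>
  if h : (i : ℕ) = 0 then 1 else
    -(∑ j : Fin n, m (k - (j:ℤ)) * Ring.inverse (Tmat m (k+1) n) j ⟨(i:ℕ) - 1, by omega⟩)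

noncomputable def Hvec (k : ℤ) (n : ℕ) : Fin (n+1) → R := fun i =>
  if h : (i : ℕ) = n then 1 else
    -(∑ j : Fin n, m (k + (n:ℤ) - (j:ℤ)) *
        Ring.inverse (Tmat m k n) j ⟨(i:ℕ), by omega⟩)

lemma Wvec_ortho (k : ℤ) (n : ℕ) (hT : IsUnit (Tmat m (k+1) n)) (jc : ℕ) (hjc : jc ≤ n) :
    ∑ i : Fin (n+1), Wvec m k n i * m (k + (i:ℤ) - (jc:ℤ)) =
      if jc = n then Gq m n k else 0 := by
  have hmul : Ring.inverse (Tmat m (k+1) n) * Tmat m (k+1) n = 1 :=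
    Ring.inverse_mul_cancel _ hT
  rw [Fin.sum_univ_succ]
  have h0 : Wvec m k n 0 = 1 := by simp [Wvec]
  have hs : ∀ i : Fin n, Wvec m k n i.succ =
      -(∑ j : Fin n, m (k - (j:ℤ)) * Ring.inverse (Tmat m (k+1) n) j i) := by
    intro i
    have : ((i.succ : Fin (n+1)) : ℕ) ≠ 0 := by simp
    rw [Wvec, dif_neg this]
    congr 1
  simp only [hs, h0, one_mul, Fin.val_succ, neg_mul, Finset.sum_mul, mul_assoc]
  rw [Finset.sum_neg_distrib, Finset.sum_comm]
  rcases eq_or_lt_of_le hjc with h | h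
  · subst h
    rw [if_pos rfl, Gq, ← sub_eq_add_neg]
    congr 1
    · congr 1
      simp
    · refine Finset.sum_congr rfl fun j _ => Finset.sum_congr rfl fun i _ => ?_
      rw [← mul_assoc]
      congr 2
      push_cast
      ring
  · rw [if_neg (by omega)]
    push_cast
    have key : ∀ j : Fin n, (∑ i : Fin n,
        Ring.inverse (Tmat m (k+1) n) j i * m (k + ((i:ℤ) + 1) - (jc:ℤ)))
        = if j = (⟨jc, h⟩ : Fin n) then 1 else 0 := by
      intro j
      have hcol : ∀ i : Fin n, m (k + ((i:ℤ) + 1) - (jc:ℤ)) = Tmat m (k+1) n i ⟨jc, h⟩ := by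
        intro i
        show m _ = m _
        congr 1
        push_cast
        ring
      simp only [hcol, ← Matrix.mul_apply, hmul, Matrix.one_apply]
    simp_rw [← Finset.mul_sum, key]
    simp only [mul_ite, mul_one, mul_zero, Finset.sum_ite_eq', Finset.mem_univ, if_true]
    rw [show k - (jc:ℤ) = k + (((0 : Fin (n+1)) : ℕ):ℤ) - (jc:ℤ) from by simp]
    rw [add_neg_cancel]

lemma Hvec_ortho (k : ℤ) (n : ℕ) (hT : IsUnit (Tmat m k n)) (jc : ℕ) (hjc : jc ≤ n) :
    ∑ i : Fin (n+1), Hvec m k n i * m (k + (i:ℤ) - (jc:ℤ)) =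
      if jc = n then Hq m n k else 0 := by
  have hmul : Ring.inverse (Tmat m k n) * Tmat m k n = 1 :=
    Ring.inverse_mul_cancel _ hT
  rw [Fin.sum_univ_castSucc]
  have h0 : Hvec m k n (Fin.last n) = 1 := by simp [Hvec]
  have hs : ∀ i : Fin n, Hvec m k n i.castSucc =
      -(∑ j : Fin n, m (k + (n:ℤ) - (j:ℤ)) * Ring.inverse (Tmat m k n) j i) := by
    intro i
    have : ((i.castSucc : Fin (n+1)) : ℕ) ≠ n := by simp; omega
    rw [Hvec, dif_neg this]
    congr 1
  simp only [hs, h0, one_mul, Fin.coe_castSucc, Fin.val_last, neg_mul, Finset.sum_mul,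
    mul_assoc]
  rw [Finset.sum_neg_distrib, Finset.sum_comm]
  rcases eq_or_lt_of_le hjc with h | h
  · subst h
    rw [if_pos rfl, Hq]
    rw [show k + (jc:ℤ) - (jc:ℤ) = k by ring]
    rw [add_comm, ← sub_eq_add_neg]
    congr 1
    refine Finset.sum_congr rfl fun j _ => Finset.sum_congr rfl fun i _ => ?_
    rw [mul_assoc]
    congr 2
    ring
  · rw [if_neg (by omega)]
    have key : ∀ j : Fin n, (∑ i : Fin n,
        Ring.inverse (Tmat m k n) j i * m (k + (i:ℤ) - (jc:ℤ)))
        = if j = (⟨jc, h⟩ : Fin n) then 1 else 0 := by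
      intro j
      have hcol : ∀ i : Fin n, m (k + (i:ℤ) - (jc:ℤ)) = Tmat m k n i ⟨jc, h⟩ := fun i => rfl
      simp only [hcol, ← Matrix.mul_apply, hmul, Matrix.one_apply]
    simp_rw [← Finset.mul_sum, key]
    simp only [mul_ite, mul_one, mul_zero, Finset.sum_ite_eq', Finset.mem_univ, if_true]
    rw [neg_add_cancel]

end Aux3
section Aux4
variable {R : Type*} [DivisionRing R] (m : ℤ → R)

lemma pairing {M : ℕ} (a : Fin M → Fin M → R) (u v : Fin M → R) :
    ∑ j, (∑ i, u i * a i j) * v j = ∑ i, u i * (∑ j, a i j * v j) := by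
  simp_rw [Finset.sum_mul, Finset.mul_sum, mul_assoc]
  exact Finset.sum_comm

lemma sum_two {M : ℕ} (f : Fin M → R) (a b : Fin M) (hab : a ≠ b)
    (h : ∀ j, j ≠ a → j ≠ b → f j = 0) :
    ∑ j, f j = f a + f b := by
  rw [← Finset.sum_subset (Finset.subset_univ {a, b})]
  · rw [Finset.sum_pair hab]
  · intro x _ hx
    simp only [Finset.mem_insert, Finset.mem_singleton, not_or] at hx
    exact h x hx.1 hx.2

lemma inv_solve {M : ℕ} (T : Matrix (Fin M) (Fin M) R) (hT : IsUnit T) (v c : Fin M → R)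
    (h : ∀ i, ∑ j, T i j * v j = c i) (j : Fin M) :
    v j = ∑ i, Ring.inverse T j i * c i := by
  have h1 : Ring.inverse T * T = 1 := Ring.inverse_mul_cancel _ hT
  have h2 : v j = ∑ l, (Ring.inverse T * T) j l * v l := by
    rw [h1]
    simp [Matrix.one_apply, ite_mul]
  rw [h2]
  simp_rw [Matrix.mul_apply, Finset.sum_mul, mul_assoc]
  rw [Finset.sum_comm]
  simp_rw [← Finset.mul_sum, h]

variable (D : R → R) (hD_add : ∀ a b : R, D (a + b) = D a + D b)
  (hD_mul : ∀ a b : R, D (a * b) = D a * b + a * D b)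

include hD_add in
lemma D_zero : D 0 = 0 := map_zero (AddMonoidHom.mk' D hD_add)

include hD_mul hD_add in
lemma D_one : D 1 = 0 := by
  have h1 := hD_mul 1 1
  rw [mul_one, one_mul, mul_one] at h1
  exact (left_eq_add.mp h1)

include hD_add in
lemma D_sum {ι : Type*} (s : Finset ι) (f : ι → R) :
    D (∑ x ∈ s, f x) = ∑ x ∈ s, D (f x) :=
  map_sum (AddMonoidHom.mk' D hD_add) f s

end Aux4
section Aux5
variable {R : Type*} [DivisionRing R] (m : ℤ → R) (D : R → R)

lemma partA
    (hD_add : ∀ a b : R, D (a + b) = D a + D b)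
    (hD_mul : ∀ a b : R, D (a * b) = D a * b + a * D b)
    (hm : ∀ j : ℤ, D (m j) = m (j + 1))
    (N : ℕ) (hT1 : IsUnit (Tmat m 0 (N+1))) (hT3 : IsUnit (Tmat m 0 N))
    (hH3 : Hq m N 0 ≠ 0) (j : Fin (N+1)) :
    D (Qs m 0 (N+1) (-(j:ℤ)))
      = Qs m 0 N (-(j:ℤ)) * ((Hq m N 0)⁻¹ * -(Hq m (N+1) 0)) := by
  set H1 := Hq m (N+1) 0 with hH1def
  set H0 := Hq m N 0 with hH0def
  -- the differentiated orthogonality relations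
  have row : ∀ i : Fin (N+1),
      ∑ jj : Fin (N+1), Tmat m 0 (N+1) i jj * D (Qs m 0 (N+1) (-(jj:ℤ)))
        = if (i:ℕ) = N then -H1 else 0 := by
    intro i
    have base := Qs_ortho m 0 (N+1) hT1 i (by omega)
    rw [if_neg (by omega)] at base
    have dbase := congrArg D base
    rw [D_zero D hD_add, D_sum D hD_add] at dbase
    have expand : ∀ jj : Fin (N+2),
        D (m (0 + (i:ℤ) - (jj:ℤ)) * Qs m 0 (N+1) (-(jj:ℤ)))
          = m (0 + (((i:ℕ)+1 : ℕ):ℤ) - (jj:ℤ)) * Qs m 0 (N+1) (-(jj:ℤ))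
            + m (0 + (i:ℤ) - (jj:ℤ)) * D (Qs m 0 (N+1) (-(jj:ℤ))) := by
      intro jj
      rw [hD_mul, hm, show (0:ℤ) + (i:ℤ) - (jj:ℤ) + 1 = 0 + (((i:ℕ)+1 : ℕ):ℤ) - (jj:ℤ) by
        push_cast; ring]
    rw [Finset.sum_congr rfl (fun jj _ => expand jj), Finset.sum_add_distrib] at dbase
    have first := Qs_ortho m 0 (N+1) hT1 ((i:ℕ)+1) (by omega)
    rw [first] at dbase
    -- peel the last term of the second sum
    rw [Fin.sum_univ_castSucc] at dbase
    have hlast : Qs m 0 (N+1) (-((Fin.last (N+1) : Fin (N+2)):ℤ)) = 1 := by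
      rw [show ((Fin.last (N+1) : Fin (N+2)):ℤ) = ((N+1:ℕ):ℤ) by simp]
      exact Qs_lead m 0 (N+1)
    rw [hlast, D_one D hD_add hD_mul, mul_zero, add_zero] at dbase
    have : ∑ jj : Fin (N+1),
        m (0 + (i:ℤ) - ((jj.castSucc : Fin (N+2)):ℤ)) * D (Qs m 0 (N+1) (-((jj.castSucc : Fin (N+2)):ℤ)))
        = ∑ jj : Fin (N+1), Tmat m 0 (N+1) i jj * D (Qs m 0 (N+1) (-(jj:ℤ))) := by
      refine Finset.sum_congr rfl fun jj _ => ?_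
      have hc : ((jj.castSucc : Fin (N+2)):ℤ) = (jj:ℤ) := by simp
      rw [hc]
      rfl
    rw [this] at dbase
    rcases eq_or_ne ((i:ℕ)) N with h | h
    · rw [if_pos (show (i:ℕ) + 1 = N + 1 by omega)] at dbase
      rw [if_pos h]
      exact eq_neg_of_add_eq_zero_right dbase
    · rw [if_neg (show ¬((i:ℕ) + 1 = N + 1) by omega)] at dbase
      rw [zero_add] at dbase
      rw [if_neg h]
      exact dbase
  -- the Q_{N} system through the same matrix
  have rowq : ∀ i : Fin (N+1),
      ∑ jj : Fin (N+1), Tmat m 0 (N+1) i jj * Qs m 0 N (-(jj:ℤ))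
        = if (i:ℕ) = N then H0 else 0 := by
    intro i
    exact Qs_ortho m 0 N hT3 i (by omega)
  -- solve both systems
  have psol := inv_solve (Tmat m 0 (N+1)) hT1 _ _ row j
  have qsol := inv_solve (Tmat m 0 (N+1)) hT1 _ _ rowq j
  have hNlt : N < N + 1 := by omega
  have hsingle : ∀ c : R,
      (∑ i : Fin (N+1), Ring.inverse (Tmat m 0 (N+1)) j i * (if (i:ℕ) = N then c else 0))
        = Ring.inverse (Tmat m 0 (N+1)) j ⟨N, hNlt⟩ * c := by
    intro c
    rw [Finset.sum_eq_single (⟨N, hNlt⟩ : Fin (N+1))]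
    · rw [if_pos rfl]
    · intro b _ hb
      rw [if_neg (by simpa [Fin.ext_iff] using hb), mul_zero]
    · intro hmem
      exact absurd (Finset.mem_univ _) hmem
  rw [hsingle] at psol qsol
  have hinv : Ring.inverse (Tmat m 0 (N+1)) j ⟨N, hNlt⟩ = Qs m 0 N (-(j:ℤ)) * H0⁻¹ := by
    rw [qsol, mul_assoc, mul_inv_cancel₀ hH3, mul_one]
  rw [psol, hinv, mul_assoc]

end Aux5
section Aux6
variable {R : Type*} [DivisionRing R] (m : ℤ → R)

/-- entries of the big `(N+2) × (N+2)` Toeplitz matrix `T_{N+2}^{(-1)}`. -/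
noncomputable def amat (N : ℕ) : Fin (N+2) → Fin (N+2) → R :=
  fun i j => m (-1 + (i:ℤ) - (j:ℤ))

/-- coefficients of `Q_N^{(-1)}` shifted by one position. -/
noncomputable def qvec (N : ℕ) : Fin (N+2) → R := fun j => Qs m (-1) N (1 - (j:ℤ))

/-- coefficients of `Q_N^{(0)}`. -/
noncomputable def tvec (N : ℕ) : Fin (N+2) → R := fun j => Qs m 0 N (-(j:ℤ))

/-- left vector for `G_N^{(-1)}`. -/
noncomputable def wvecA (N : ℕ) : Fin (N+2) → R := fun i =>
  if h : (i:ℕ) < N+1 then Wvec m (-1) N ⟨i, h⟩ else 0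

/-- left vector for `G_N^{(-2)}`. -/
noncomputable def wvecB (N : ℕ) : Fin (N+2) → R := fun i =>
  if h : (i:ℕ) < N+1 then Wvec m (-2) N ⟨i, h⟩ else 0

lemma cq' (N : ℕ) (hT4 : IsUnit (Tmat m (-1) N)) (i : Fin (N+2)) (hi : 1 ≤ (i:ℕ)) :
    ∑ j, amat m N i j * qvec m N j = if (i:ℕ) = N+1 then Hq m N (-1) else 0 := by
  rw [Fin.sum_univ_succ]
  have h0 : qvec m N 0 = 0 := by
    show Qs m (-1) N (1 - ((0:ℕ):ℤ)) = 0
    rw [show (1:ℤ) - ((0:ℕ):ℤ) = 1 by norm_num]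
    exact Qs_zero m (-1) N 1 (Or.inr one_pos)
  rw [h0, mul_zero, zero_add]
  have hmatch : ∀ j : Fin (N+1),
      amat m N i j.succ * qvec m N j.succ
        = m ((-1) + ((((i:ℕ) - 1 : ℕ)):ℤ) - (j:ℤ)) * Qs m (-1) N (-(j:ℤ)) := by
    intro j
    congr 1
    · show m _ = m _
      congr 1
      push_cast [Fin.val_succ]
      omega
    · show Qs m (-1) N _ = Qs m (-1) N _
      congr 1
      push_cast [Fin.val_succ]
      ring
  rw [Finset.sum_congr rfl fun j _ => hmatch j]
  rw [Qs_ortho m (-1) N hT4 ((i:ℕ) - 1) (by omega)]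
  rcases eq_or_ne ((i:ℕ)) (N+1) with h | h
  · rw [if_pos h, if_pos (by omega)]
  · rw [if_neg h, if_neg (by omega)]

lemma ct (N : ℕ) (hT3 : IsUnit (Tmat m 0 N)) (i : Fin (N+2)) (hi : 1 ≤ (i:ℕ)) :
    ∑ j, amat m N i j * tvec m N j = if (i:ℕ) = N+1 then Hq m N 0 else 0 := by
  rw [Fin.sum_univ_castSucc]
  have h0 : tvec m N (Fin.last (N+1)) = 0 := by
    show Qs m 0 N (-(((N+1:ℕ)):ℤ)) = 0
    exact Qs_zero m 0 N _ (Or.inl (by push_cast; omega))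
  rw [h0, mul_zero, add_zero]
  have hmatch : ∀ j : Fin (N+1),
      amat m N i j.castSucc * tvec m N j.castSucc
        = m (0 + ((((i:ℕ) - 1 : ℕ)):ℤ) - (j:ℤ)) * Qs m 0 N (-(j:ℤ)) := by
    intro j
    have e1 : amat m N i j.castSucc = m (0 + ((((i:ℕ) - 1 : ℕ)):ℤ) - (j:ℤ)) := by
      show m _ = m _
      congr 1
      push_cast [Fin.coe_castSucc]
      omega
    have e2 : tvec m N j.castSucc = Qs m 0 N (-(j:ℤ)) := rfl
    rw [e1, e2]
  rw [Finset.sum_congr rfl fun j _ => hmatch j]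
  rw [Qs_ortho m 0 N hT3 ((i:ℕ) - 1) (by omega)]
  rcases eq_or_ne ((i:ℕ)) (N+1) with h | h
  · rw [if_pos h, if_pos (by omega)]
  · rw [if_neg h, if_neg (by omega)]

lemma chv (N : ℕ) (hT2 : IsUnit (Tmat m (-1) (N+1))) (jc : Fin (N+2)) :
    ∑ i, Hvec m (-1) (N+1) i * amat m N i jc
      = if (jc:ℕ) = N+1 then Hq m (N+1) (-1) else 0 := by
  exact Hvec_ortho m (-1) (N+1) hT2 (jc:ℕ) (by omega)

lemma cwA (N : ℕ) (hT3 : IsUnit (Tmat m 0 N)) (jc : Fin (N+2)) (hjc : (jc:ℕ) ≤ N) :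
    ∑ i, wvecA m N i * amat m N i jc = if (jc:ℕ) = N then Gq m N (-1) else 0 := by
  rw [Fin.sum_univ_castSucc]
  have h0 : wvecA m N (Fin.last (N+1)) = 0 := by
    rw [wvecA, dif_neg (by simp)]
  rw [h0, zero_mul, add_zero]
  have hmatch : ∀ i : Fin (N+1),
      wvecA m N i.castSucc * amat m N i.castSucc jc
        = Wvec m (-1) N i * m ((-1) + (i:ℤ) - ((jc:ℕ):ℤ)) := by
    intro i
    have e1 : wvecA m N i.castSucc = Wvec m (-1) N i := by
      rw [wvecA, dif_pos (by have := i.isLt; simp; omega)]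
      all_goals rfl
    have e2 : amat m N i.castSucc jc = m ((-1) + (i:ℤ) - ((jc:ℕ):ℤ)) := rfl
    rw [e1, e2]
  rw [Finset.sum_congr rfl fun i _ => hmatch i]
  have hT : IsUnit (Tmat m ((-1) + 1) N) := by
    rw [show ((-1:ℤ) + 1) = 0 by norm_num]
    exact hT3
  exact Wvec_ortho m (-1) N hT (jc:ℕ) hjc

lemma cwB (N : ℕ) (hT4 : IsUnit (Tmat m (-1) N)) (jc : Fin (N+2)) (hjc : 1 ≤ (jc:ℕ)) :
    ∑ i, wvecB m N i * amat m N i jc = if (jc:ℕ) = N+1 then Gq m N (-2) else 0 := by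
  rw [Fin.sum_univ_castSucc]
  have h0 : wvecB m N (Fin.last (N+1)) = 0 := by
    rw [wvecB, dif_neg (by simp)]
  rw [h0, zero_mul, add_zero]
  have hmatch : ∀ i : Fin (N+1),
      wvecB m N i.castSucc * amat m N i.castSucc jc
        = Wvec m (-2) N i * m ((-2) + (i:ℤ) - ((((jc:ℕ) - 1 : ℕ)):ℤ)) := by
    intro i
    have e1 : wvecB m N i.castSucc = Wvec m (-2) N i := by
      rw [wvecB, dif_pos (by have := i.isLt; simp; omega)]
      all_goals rfl
    have e2 : amat m N i.castSucc jc = m ((-2) + (i:ℤ) - ((((jc:ℕ) - 1 : ℕ)):ℤ)) := by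
      show m _ = m _
      congr 1
      push_cast [Fin.coe_castSucc]
      omega
    rw [e1, e2]
  rw [Finset.sum_congr rfl fun i _ => hmatch i]
  have hT : IsUnit (Tmat m ((-2) + 1) N) := by
    rw [show ((-2:ℤ) + 1) = -1 by norm_num]
    exact hT4
  rw [Wvec_ortho m (-2) N hT ((jc:ℕ) - 1) (by omega)]
  rcases eq_or_ne ((jc:ℕ)) (N+1) with h | h
  · rw [if_pos h, if_pos (by omega)]
  · rw [if_neg h, if_neg (by omega)]

end Aux6
section Aux7
variable {R : Type*} [DivisionRing R] (m : ℤ → R)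

lemma partB (N : ℕ)
    (hT2 : IsUnit (Tmat m (-1) (N+1)))
    (hT3 : IsUnit (Tmat m 0 N))
    (hT4 : IsUnit (Tmat m (-1) N))
    (hG1 : Gq m N (-1) ≠ 0) :
    Hq m (N+1) (-1) = Hq m N (-1) - Hq m N 0 * (Gq m N (-1))⁻¹ * Gq m N (-2) := by
  have hN2 : N < N + 2 := by omega
  have hne0last : (0 : Fin (N+2)) ≠ Fin.last (N+1) := Fin.ne_of_val_ne (by simp)
  have hNlast : (⟨N, hN2⟩ : Fin (N+2)) ≠ Fin.last (N+1) := Fin.ne_of_val_ne (by simp)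
  have hvne : ∀ j : Fin (N+2), j ≠ 0 → 1 ≤ (j:ℕ) := fun j h =>
    Nat.one_le_iff_ne_zero.mpr (fun hv => h (Fin.ext hv))
  have hlne : ∀ j : Fin (N+2), j ≠ Fin.last (N+1) → (j:ℕ) ≠ N+1 := fun j h hv =>
    h (Fin.ext (by simpa using hv))
  -- special entries
  have hq'0 : qvec m N 0 = 0 := by
    show Qs m (-1) N _ = 0
    rw [show (1 : ℤ) - (((0 : Fin (N+2)) : ℕ) : ℤ) = 1 by simp]
    exact Qs_zero m (-1) N 1 (Or.inr one_pos)
  have hq'last : qvec m N (Fin.last (N+1)) = 1 := by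
    show Qs m (-1) N _ = 1
    rw [show (1 : ℤ) - (((Fin.last (N+1) : Fin (N+2)) : ℕ) : ℤ) = -(N:ℤ) by
      push_cast [Fin.val_last]; ring]
    exact Qs_lead m (-1) N
  have htlast : tvec m N (Fin.last (N+1)) = 0 := by
    show Qs m 0 N _ = 0
    exact Qs_zero m 0 N _ (Or.inl (by push_cast [Fin.val_last]; omega))
  have htN : tvec m N ⟨N, hN2⟩ = 1 := Qs_lead m 0 N
  have hhvlast : Hvec m (-1) (N+1) (Fin.last (N+1)) = 1 := by
    rw [Hvec, dif_pos (by simp)]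
  have hwA0 : wvecA m N 0 = 1 := by
    simp [wvecA, Wvec]
  have hwAlast : wvecA m N (Fin.last (N+1)) = 0 := by
    rw [wvecA, dif_neg (by simp)]
  have hwB0 : wvecB m N 0 = 1 := by
    simp [wvecB, Wvec]
  have hwBlast : wvecB m N (Fin.last (N+1)) = 0 := by
    rw [wvecB, dif_neg (by simp)]
  have hlast1 : 1 ≤ ((Fin.last (N+1) : Fin (N+2)) : ℕ) := by simp
  have hlasteq : ((Fin.last (N+1) : Fin (N+2)) : ℕ) = N + 1 := by simp
  -- pairing 1 : wvecB against qvec, gives  Gq m N (-2) = (A q')_0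
  have P1L : (∑ j, (∑ i, wvecB m N i * amat m N i j) * qvec m N j) = Gq m N (-2) := by
    rw [sum_two (fun j => (∑ i, wvecB m N i * amat m N i j) * qvec m N j) 0
      (Fin.last (N+1)) hne0last (fun j hj0 hjl => by
        rw [cwB m N hT4 j (hvne j hj0), if_neg (hlne j hjl), zero_mul])]
    rw [hq'0, mul_zero, zero_add, cwB m N hT4 _ hlast1, if_pos hlasteq, hq'last, mul_one]
  have P1R : (∑ i, wvecB m N i * (∑ j, amat m N i j * qvec m N j))
      = ∑ j, amat m N 0 j * qvec m N j := by
    rw [sum_two (fun i => wvecB m N i * (∑ j, amat m N i j * qvec m N j)) 0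
      (Fin.last (N+1)) hne0last (fun i hi0 hil => by
        rw [cq' m N hT4 i (hvne i hi0), if_neg (hlne i hil), mul_zero])]
    rw [hwB0, one_mul, hwBlast, zero_mul, add_zero]
  have hg : Gq m N (-2) = ∑ j, amat m N 0 j * qvec m N j := by
    rw [← P1L, pairing, P1R]
  -- pairing 2 : wvecA against tvec, gives  Gq m N (-1) = (A t)_0
  have P2L : (∑ j, (∑ i, wvecA m N i * amat m N i j) * tvec m N j) = Gq m N (-1) := by
    rw [sum_two (fun j => (∑ i, wvecA m N i * amat m N i j) * tvec m N j) ⟨N, hN2⟩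
      (Fin.last (N+1)) hNlast (fun j hjN hjl => by
        rw [cwA m N hT3 j (by have := hlne j hjl; omega),
          if_neg (fun hv => hjN (Fin.ext hv)), zero_mul])]
    rw [htlast, mul_zero, add_zero, cwA m N hT3 _ (by simp), if_pos rfl, htN, mul_one]
  have P2R : (∑ i, wvecA m N i * (∑ j, amat m N i j * tvec m N j))
      = ∑ j, amat m N 0 j * tvec m N j := by
    rw [sum_two (fun i => wvecA m N i * (∑ j, amat m N i j * tvec m N j)) 0
      (Fin.last (N+1)) hne0last (fun i hi0 hil => by
        rw [ct m N hT3 i (hvne i hi0), if_neg (hlne i hil), mul_zero])]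
    rw [hwA0, one_mul, hwAlast, zero_mul, add_zero]
  have he : Gq m N (-1) = ∑ j, amat m N 0 j * tvec m N j := by
    rw [← P2L, pairing, P2R]
  -- pairing 3 : Hvec against tvec
  have P3L : (∑ j, (∑ i, Hvec m (-1) (N+1) i * amat m N i j) * tvec m N j) = 0 :=
    Finset.sum_eq_zero (fun j _ => by
      rcases eq_or_ne j (Fin.last (N+1)) with h | h
      · rw [h, htlast, mul_zero]
      · rw [chv m N hT2 j, if_neg (hlne j h), zero_mul])
  have P3R : (∑ i, Hvec m (-1) (N+1) i * (∑ j, amat m N i j * tvec m N j))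
      = Hvec m (-1) (N+1) 0 * (∑ j, amat m N 0 j * tvec m N j) + Hq m N 0 := by
    rw [sum_two (fun i => Hvec m (-1) (N+1) i * (∑ j, amat m N i j * tvec m N j)) 0
      (Fin.last (N+1)) hne0last (fun i hi0 hil => by
        rw [ct m N hT3 i (hvne i hi0), if_neg (hlne i hil), mul_zero])]
    rw [ct m N hT3 _ hlast1, if_pos hlasteq, hhvlast, one_mul]
  have E3 : Hvec m (-1) (N+1) 0 * (∑ j, amat m N 0 j * tvec m N j) + Hq m N 0 = 0 := by
    rw [← P3R, ← pairing, P3L]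
  -- pairing 5 : Hvec against qvec
  have P5L : (∑ j, (∑ i, Hvec m (-1) (N+1) i * amat m N i j) * qvec m N j)
      = Hq m (N+1) (-1) := by
    rw [sum_two (fun j => (∑ i, Hvec m (-1) (N+1) i * amat m N i j) * qvec m N j) 0
      (Fin.last (N+1)) hne0last (fun j hj0 hjl => by
        rw [chv m N hT2 j, if_neg (hlne j hjl), zero_mul])]
    rw [hq'0, mul_zero, zero_add, chv m N hT2 _, if_pos hlasteq, hq'last, mul_one]
  have P5R : (∑ i, Hvec m (-1) (N+1) i * (∑ j, amat m N i j * qvec m N j))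
      = Hvec m (-1) (N+1) 0 * (∑ j, amat m N 0 j * qvec m N j) + Hq m N (-1) := by
    rw [sum_two (fun i => Hvec m (-1) (N+1) i * (∑ j, amat m N i j * qvec m N j)) 0
      (Fin.last (N+1)) hne0last (fun i hi0 hil => by
        rw [cq' m N hT4 i (hvne i hi0), if_neg (hlne i hil), mul_zero])]
    rw [cq' m N hT4 _ hlast1, if_pos hlasteq, hhvlast, one_mul]
  have E5 : Hq m (N+1) (-1)
      = Hvec m (-1) (N+1) 0 * (∑ j, amat m N 0 j * qvec m N j) + Hq m N (-1) := by
    rw [← P5L, pairing, P5R]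
  -- combine
  have h1 : Hvec m (-1) (N+1) 0 * Gq m N (-1) = -(Hq m N 0) := by
    rw [he]
    exact eq_neg_of_add_eq_zero_left E3
  have hval : Hvec m (-1) (N+1) 0 = -(Hq m N 0) * (Gq m N (-1))⁻¹ := by
    calc Hvec m (-1) (N+1) 0
        = Hvec m (-1) (N+1) 0 * Gq m N (-1) * (Gq m N (-1))⁻¹ := by
          rw [mul_assoc, mul_inv_cancel₀ hG1, mul_one]
      _ = -(Hq m N 0) * (Gq m N (-1))⁻¹ := by rw [h1]
  rw [E5, ← hg, hval, neg_mul, neg_mul, neg_add_eq_sub]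

end Aux7

/-- Positive time flow of non-commutative Laurent bi-orthogonal polynomials: if `D` is a
derivation with `D(m_j) = m_{j+1}`, then `∂_t (Q_n^{(0)})* = (Q_{n−1}^{(0)})*·η_n` with
`η_n = −ξ_{n−1}·(ψ_n^{(0)})⁻¹` and `ξ_{n−1} = ψ_{n−1}^{(0)} − φ_{n−1}^{(−1)}`,
coefficientwise. -/
theorem stmt_19 {R : Type*} [DivisionRing R] (m : ℤ → R) (D : R → R)
    (hD_add : ∀ a b : R, D (a + b) = D a + D b)
    (hD_mul : ∀ a b : R, D (a * b) = D a * b + a * D b)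
    (hm : ∀ j : ℤ, D (m j) = m (j + 1))
    (n : ℕ) (hn : 1 ≤ n)
    (hT1 : IsUnit (Tmat m 0 n))
    (hT2 : IsUnit (Tmat m (-1) n))
    (hT3 : IsUnit (Tmat m 0 (n - 1)))
    (hT4 : IsUnit (Tmat m (-1) (n - 1)))
    (hH1 : Hq m n 0 ≠ 0)
    (hH2 : Hq m n (-1) ≠ 0)
    (hH3 : Hq m (n - 1) 0 ≠ 0)
    (hH4 : Hq m (n - 1) (-1) ≠ 0)
    (hG1 : Gq m (n - 1) (-1) ≠ 0)
    (hG2 : Gq m (n - 1) (-2) ≠ 0) :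
    ∀ r : ℤ,
      D (Qs m 0 n r)
        = Qs m 0 (n - 1) r *
            (-(psi m (n - 1) 0 - phi m (n - 1) (-1)) * (psi m n 0)⁻¹) := by
  obtain ⟨N, rfl⟩ : ∃ N, n = N + 1 := ⟨n - 1, by omega⟩
  simp only [Nat.add_sub_cancel] at hT3 hT4 hH3 hH4 hG1 hG2 ⊢
  have hstar := partB m N hT2 hT3 hT4 hG1
  have key1 : (Hq m N 0)⁻¹ * Hq m N (-1) - (Gq m N (-1))⁻¹ * Gq m N (-2)
      = (Hq m N 0)⁻¹ * Hq m (N+1) (-1) := by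
    rw [hstar, mul_sub]
    congr 1
    rw [← mul_assoc, ← mul_assoc, inv_mul_cancel₀ hH3, one_mul]
  have heta : -(psi m N 0 - phi m N (-1)) * (psi m (N+1) 0)⁻¹
      = (Hq m N 0)⁻¹ * -(Hq m (N+1) 0) := by
    simp only [psi, phi, show ((0:ℤ) - 1) = -1 by norm_num,
      show ((-1:ℤ) - 1) = -2 by norm_num]
    rw [key1, mul_inv_rev, inv_inv, neg_mul, mul_assoc,
      ← mul_assoc (Hq m (N+1) (-1)), mul_inv_cancel₀ hH2, one_mul, ← mul_neg]
  intro r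
  rw [heta]
  by_cases h1 : -((N:ℤ)+1) < r ∧ r ≤ 0
  · obtain ⟨hr1, hr2⟩ := h1
    have hj : (-r).toNat < N + 1 := by omega
    have hr : r = -(((⟨(-r).toNat, hj⟩ : Fin (N+1)) : ℕ) : ℤ) := by
      show r = -(((-r).toNat : ℤ))
      omega
    rw [hr]
    exact partA m D hD_add hD_mul hm N hT1 hT3 hH3 ⟨(-r).toNat, hj⟩
  · by_cases h2 : r = -((N:ℤ)+1)
    · subst h2
      rw [show -((N:ℤ)+1) = -(((N+1:ℕ)):ℤ) by push_cast; ring]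
      rw [Qs_lead m 0 (N+1), D_one D hD_add hD_mul]
      rw [Qs_zero m 0 N _ (Or.inl (by push_cast; omega)), zero_mul]
    · rw [Qs_zero m 0 (N+1) r (by push_cast; omega), D_zero D hD_add,
        Qs_zero m 0 N r (by push_cast; omega), zero_mul]
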